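/- For every d ≥ 2, the space ℝ^d is not the union of (d−1) σ-sprays: for any points c₁, …, c_{d−1} ∈ ℝ^d and any sets X₁, …, X_{d−1} ⊆ ℝ^d such that each X_i is a σ-spray with center c_i, the union X₁ ∪ ⋯ ∪ X_{d−1} is not all of ℝ^d. -/

import Mathlib

open RealInnerProductSpace

/-- A σ-spray with center `c`: every sphere centered at `c` meets `X` in a countable set. -/
def IsSigmaSpray {d : ℕ} (c : EuclideanSpace ℝ (Fin d))
    (X : Set (EuclideanSpace ℝ (Fin d))) : Prop :=
  ∀ r : ℝ, {x ∈ X | ‖x - c‖ = r}.Countable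

set_option maxHeartbeats 1000000 in
open RealInnerProductSpace in
theorem stmt3 (d : ℕ) (hd : 2 ≤ d)
    (c : Fin (d - 1) → EuclideanSpace ℝ (Fin d))
    (X : Fin (d - 1) → Set (EuclideanSpace ℝ (Fin d)))
    (hX : ∀ i, IsSigmaSpray (c i) (X i)) :
    (⋃ i, X i) ≠ Set.univ := by
  classical
  intro hU
  have hd1 : 0 < d - 1 := by omega
  set i0 : Fin (d - 1) := ⟨0, hd1⟩ with hi0
  -- the span of the differences of centers
  set g : Fin (d - 2) → EuclideanSpace ℝ (Fin d) :=
    fun j => c ⟨j.1 + 1, by omega⟩ - c i0 with hg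
  set K : Submodule ℝ (EuclideanSpace ℝ (Fin d)) := Submodule.span ℝ (Set.range g) with hK
  have hmem : ∀ i, c i - c i0 ∈ K := by
    intro i
    rcases Nat.eq_zero_or_pos i.1 with h | h
    · have : i = i0 := Fin.ext h
      simp [this]
    · have hii : (⟨i.1 - 1 + 1, by omega⟩ : Fin (d - 1)) = i := by
        ext; simp; omega
      have heq : g ⟨i.1 - 1, by omega⟩ = c i - c i0 :=
        congrArg (fun z => c z - c i0) hii
      have hm : g ⟨i.1 - 1, by omega⟩ ∈ K :=
        Submodule.subset_span ⟨_, rfl⟩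
      rwa [heq] at hm
  have hKrank : Module.finrank ℝ K ≤ d - 2 := by
    simpa [Set.finrank] using finrank_range_le_card (R := ℝ) g
  have hWrank : 2 ≤ Module.finrank ℝ Kᗮ := by
    have h1 := Submodule.finrank_add_finrank_orthogonal K
    have hE : Module.finrank ℝ (EuclideanSpace ℝ (Fin d)) = d :=
      finrank_euclideanSpace_fin
    omega
  -- orthonormal pair in Kᗮ
  set b := stdOrthonormalBasis ℝ (↥Kᗮ) with hb
  set w1 : EuclideanSpace ℝ (Fin d) := ((b ⟨0, by omega⟩ : ↥Kᗮ) : EuclideanSpace ℝ (Fin d)) with hw1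
  set w2 : EuclideanSpace ℝ (Fin d) := ((b ⟨1, by omega⟩ : ↥Kᗮ) : EuclideanSpace ℝ (Fin d)) with hw2
  have hw1K : w1 ∈ Kᗮ := (b ⟨0, by omega⟩ : ↥Kᗮ).2
  have hw2K : w2 ∈ Kᗮ := (b ⟨1, by omega⟩ : ↥Kᗮ).2
  have hn1 : ‖w1‖ = 1 := by
    have := b.orthonormal.1 ⟨0, by omega⟩
    exact this
  have hn2 : ‖w2‖ = 1 := by
    have := b.orthonormal.1 ⟨1, by omega⟩
    exact this
  have hon : ⟪w1, w2⟫ = 0 := by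
    have := b.orthonormal.2 (i := ⟨0, by omega⟩) (j := ⟨1, by omega⟩) (by simp)
    exact this
  -- the curve
  set f : ℝ → EuclideanSpace ℝ (Fin d) :=
    fun t => c i0 + (Real.cos t • w1 + Real.sin t • w2) with hf
  have hnorm_u : ∀ t : ℝ, ‖Real.cos t • w1 + Real.sin t • w2‖ = 1 := by
    intro t
    have hsq : ‖Real.cos t • w1 + Real.sin t • w2‖ ^ 2 = 1 := by
      rw [norm_add_sq_real, real_inner_smul_left, real_inner_smul_right, hon,
        norm_smul, norm_smul, hn1, hn2]
      simp only [Real.norm_eq_abs, mul_one, mul_zero, add_zero, mul_pow, sq_abs]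
      exact Real.cos_sq_add_sin_sq t
    nlinarith [norm_nonneg (Real.cos t • w1 + Real.sin t • w2)]
  set r : Fin (d - 1) → ℝ := fun i => Real.sqrt (1 + ‖c i0 - c i‖ ^ 2) with hr
  have hdist : ∀ t (i : Fin (d - 1)), ‖f t - c i‖ = r i := by
    intro t i
    have hmemK : c i0 - c i ∈ K := by
      have := K.neg_mem (hmem i)
      simpa [neg_sub] using this
    have hinner : ⟪Real.cos t • w1 + Real.sin t • w2, c i0 - c i⟫ = 0 := by
      refine Submodule.inner_left_of_mem_orthogonal hmemK ?_
      exact Kᗮ.add_mem (Kᗮ.smul_mem _ hw1K) (Kᗮ.smul_mem _ hw2K)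
    have hfe : f t - c i = (Real.cos t • w1 + Real.sin t • w2) + (c i0 - c i) := by
      simp [hf]
      abel
    have hsq : ‖f t - c i‖ ^ 2 = 1 + ‖c i0 - c i‖ ^ 2 := by
      rw [hfe, norm_add_sq_real, hinner, hnorm_u t]
      ring
    have hrs : r i ^ 2 = 1 + ‖c i0 - c i‖ ^ 2 := by
      rw [hr]
      exact Real.sq_sqrt (by positivity)
    have hr0 : 0 ≤ r i := by rw [hr]; positivity
    calc ‖f t - c i‖ = Real.sqrt (‖f t - c i‖ ^ 2) := (Real.sqrt_sq (norm_nonneg _)).symm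
      _ = Real.sqrt (r i ^ 2) := by rw [hsq, hrs]
      _ = r i := Real.sqrt_sq hr0
  -- injectivity on [0, π]
  have hinj : Set.InjOn f (Set.Icc 0 Real.pi) := by
    intro s hs t ht hst
    have hu : Real.cos s • w1 + Real.sin s • w2 = Real.cos t • w1 + Real.sin t • w2 := by
      have := hst
      simp only [hf] at this
      exact add_left_cancel this
    have hcos : Real.cos s = Real.cos t := by
      have h1 : ⟪w1, Real.cos s • w1 + Real.sin s • w2⟫
          = ⟪w1, Real.cos t • w1 + Real.sin t • w2⟫ := by rw [hu]
      rw [inner_add_right, inner_add_right, real_inner_smul_right, real_inner_smul_right,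
        real_inner_smul_right, real_inner_smul_right, real_inner_self_eq_norm_sq, hn1,
        hon] at h1
      simpa using h1
    exact Real.injOn_cos hs ht hcos
  -- f maps [0, π] into the union of countable sets
  have hmap : Set.MapsTo f (Set.Icc 0 Real.pi)
      (⋃ i, {x ∈ X i | ‖x - c i‖ = r i}) := by
    intro t _
    have : f t ∈ ⋃ i, X i := hU ▸ Set.mem_univ _
    rcases Set.mem_iUnion.1 this with ⟨i, hi⟩
    exact Set.mem_iUnion.2 ⟨i, hi, hdist t i⟩
  have hcnt : (Set.Icc (0:ℝ) Real.pi).Countable :=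
    hmap.countable_of_injOn hinj (Set.countable_iUnion fun i => hX i (r i))
  have : ¬ (Set.Icc (0:ℝ) Real.pi).Countable := by
    intro h
    have h1 : Cardinal.mk (Set.Icc (0:ℝ) Real.pi) ≤ Cardinal.aleph0 :=
      Cardinal.le_aleph0_iff_set_countable.2 h
    rw [Cardinal.mk_Icc_real Real.pi_pos] at h1
    exact (Cardinal.aleph0_lt_continuum).not_ge h1
  exact this hcnt
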